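/- Let K and K̂ be n×n real symmetric matrices with 0 ⪯ K̂ ⪯ K, let η > 0 and 1 ≤ k ≤ n. Let Û_k ∈ ℝ^{n×k} have as columns orthonormal eigenvectors of K̂ associated with its k largest eigenvalues λ_1(K̂), …, λ_k(K̂). If S ∈ ℝ^{n×k} is a selection operator such that Û_k^T S is invertible, then logdet(I_k + η^{-2} S^T K S) ≥ Σ_{i=1}^k log(1 + η^{-2} λ_i(K̂) / ‖(Û_k^T S)^{-1}‖_2^2). -/

import Mathlib

open Matrix BigOperators

/-- The eigenvalues of a Hermitian (real symmetric) matrix, listed in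
non-increasing order: `eigsDesc hA i` is the `(i+1)`-th largest eigenvalue. -/
noncomputable def eigsDesc {n : ℕ} {A : Matrix (Fin n) (Fin n) ℝ}
    (hA : A.IsHermitian) : Fin n → ℝ :=
  fun i => (hA.eigenvalues ∘ Tuple.sort hA.eigenvalues) i.rev

/-- The spectral norm (largest singular value) of a real matrix. -/
noncomputable def specNorm {m n : ℕ} (A : Matrix (Fin m) (Fin n) ℝ) : ℝ :=
  ‖LinearMap.toContinuousLinearMap (Matrix.toEuclideanLin A)‖

/-- `S` is a selection operator: its columns are `k` distinct standard basis
vectors of `ℝ^n`. -/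
def IsSelection {n k : ℕ} (S : Matrix (Fin n) (Fin k) ℝ) : Prop :=
  ∃ g : Fin k → Fin n, Function.Injective g ∧
    S = Matrix.of fun i j => if i = g j then (1 : ℝ) else 0

open scoped Matrix.Norms.L2Operator

section Aux

lemma specNorm_eq_norm {m n : ℕ} (A : Matrix (Fin m) (Fin n) ℝ) : specNorm A = ‖A‖ := rfl

lemma specNorm_transpose {m n : ℕ} (A : Matrix (Fin m) (Fin n) ℝ) : specNorm Aᵀ = specNorm A := by
  rw [specNorm_eq_norm, specNorm_eq_norm, ← Matrix.conjTranspose_eq_transpose_of_trivial,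
    Matrix.l2_opNorm_conjTranspose]

lemma dot_self_eq {m : ℕ} (z : Fin m → ℝ) :
    z ⬝ᵥ z = ‖(WithLp.equiv 2 (Fin m → ℝ)).symm z‖ ^ 2 := by
  rw [EuclideanSpace.norm_eq]
  rw [Real.sq_sqrt (by positivity)]
  simp [dotProduct, Real.norm_eq_abs, sq_abs, sq]

lemma dot_mulVec_le {m k : ℕ} (A : Matrix (Fin m) (Fin k) ℝ) (y : Fin k → ℝ) :
    (A *ᵥ y) ⬝ᵥ (A *ᵥ y) ≤ specNorm A ^ 2 * (y ⬝ᵥ y) := by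
  have h := Matrix.l2_opNorm_mulVec A ((WithLp.equiv 2 (Fin k → ℝ)).symm y)
  rw [dot_self_eq, dot_self_eq, specNorm_eq_norm]
  calc ‖(WithLp.equiv 2 (Fin m → ℝ)).symm (A *ᵥ y)‖ ^ 2
      ≤ (‖A‖ * ‖(WithLp.equiv 2 (Fin k → ℝ)).symm y‖) ^ 2 := by
        apply pow_le_pow_left₀ (norm_nonneg _) ?_ 2
        exact h
    _ = ‖A‖ ^ 2 * ‖(WithLp.equiv 2 (Fin k → ℝ)).symm y‖ ^ 2 := by ring

lemma specNorm_inv_pos {k : ℕ} (hk : 1 ≤ k) (M : Matrix (Fin k) (Fin k) ℝ)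
    (hM : IsUnit M.det) : 0 < specNorm M⁻¹ := by
  rw [specNorm_eq_norm]
  have hne : M⁻¹ ≠ 0 := by
    intro h
    have h1 : M⁻¹ * M = 1 := nonsing_inv_mul M hM
    rw [h, Matrix.zero_mul] at h1
    have i0 : Fin k := ⟨0, hk⟩
    have := congrFun (congrFun h1 i0) i0
    simp at this
  exact norm_pos_iff.mpr hne

lemma mul_transpose_psd {k : ℕ} (hk : 1 ≤ k) (M : Matrix (Fin k) (Fin k) ℝ)
    (hM : IsUnit M.det) :
    (M * Mᵀ - (specNorm M⁻¹)⁻¹ ^ 2 • 1).PosSemidef := by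
  have hs := specNorm_inv_pos hk M hM
  refine Matrix.PosSemidef.of_dotProduct_mulVec_nonneg ?_ ?_
  · unfold Matrix.IsHermitian
    rw [conjTranspose_sub, conjTranspose_smul, conjTranspose_one,
      Matrix.conjTranspose_eq_transpose_of_trivial, transpose_mul, transpose_transpose]
    simp
  · intro x
    have hstar : star x = x := by
      funext i; simp
    rw [hstar, sub_mulVec, dotProduct_sub, smul_mulVec, one_mulVec,
      dotProduct_smul, smul_eq_mul]
    have hxy : x ⬝ᵥ (M * Mᵀ) *ᵥ x = (Mᵀ *ᵥ x) ⬝ᵥ (Mᵀ *ᵥ x) := by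
      rw [← mulVec_mulVec, dotProduct_mulVec, ← mulVec_transpose]
    rw [hxy]
    have hx : x = (M⁻¹)ᵀ *ᵥ (Mᵀ *ᵥ x) := by
      rw [mulVec_mulVec, ← transpose_mul, mul_nonsing_inv M hM, transpose_one, one_mulVec]
    have hb : x ⬝ᵥ x ≤ specNorm M⁻¹ ^ 2 * ((Mᵀ *ᵥ x) ⬝ᵥ (Mᵀ *ᵥ x)) := by
      have := dot_mulVec_le ((M⁻¹)ᵀ) (Mᵀ *ᵥ x)
      rw [← hx, specNorm_transpose] at this
      exact this
    rw [sub_nonneg]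
    calc (specNorm M⁻¹)⁻¹ ^ 2 * (x ⬝ᵥ x)
        ≤ (specNorm M⁻¹)⁻¹ ^ 2 * (specNorm M⁻¹ ^ 2 * ((Mᵀ *ᵥ x) ⬝ᵥ (Mᵀ *ᵥ x))) := by
          apply mul_le_mul_of_nonneg_left hb (by positivity)
      _ = (Mᵀ *ᵥ x) ⬝ᵥ (Mᵀ *ᵥ x) := by
          rw [← mul_assoc, ← mul_pow, inv_mul_cancel₀ hs.ne', one_pow, one_mul]

lemma psd_smul {k : ℕ} {X : Matrix (Fin k) (Fin k) ℝ} (hX : X.PosSemidef) {c : ℝ} (hc : 0 ≤ c) :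
    (c • X).PosSemidef := by
  refine Matrix.PosSemidef.of_dotProduct_mulVec_nonneg ?_ ?_
  · unfold Matrix.IsHermitian
    rw [conjTranspose_smul, hX.1]
    simp
  · intro x
    rw [smul_mulVec, dotProduct_smul, smul_eq_mul]
    exact mul_nonneg hc (hX.dotProduct_mulVec_nonneg x)

lemma one_le_det_one_add {k : ℕ} {Q : Matrix (Fin k) (Fin k) ℝ} (hQ : Q.PosSemidef) :
    1 ≤ (1 + Q).det := by
  have hU := (Matrix.mem_unitaryGroup_iff).mp hQ.1.eigenvectorUnitary.2
  have key : 1 + Q = (hQ.1.eigenvectorUnitary : Matrix (Fin k) (Fin k) ℝ) *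
      (1 + diagonal (RCLike.ofReal ∘ hQ.1.eigenvalues)) *
      (star (hQ.1.eigenvectorUnitary : Matrix (Fin k) (Fin k) ℝ)) := by
    rw [Matrix.mul_add, Matrix.add_mul, Matrix.mul_one, hU]
    have hsp := hQ.1.spectral_theorem
    rw [Unitary.conjStarAlgAut_apply] at hsp
    rw [← hsp]
  rw [key, det_mul_right_comm, hU, one_mul]
  have : (1 : Matrix (Fin k) (Fin k) ℝ) + diagonal (RCLike.ofReal ∘ hQ.1.eigenvalues)
      = diagonal (fun i => 1 + hQ.1.eigenvalues i) := by
    rw [← diagonal_one, diagonal_add]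
    congr 1
  rw [this, det_diagonal]
  calc (1:ℝ) = ∏ _i : Fin k, 1 := by simp
    _ ≤ ∏ i, (1 + hQ.1.eigenvalues i) :=
        Finset.prod_le_prod (fun i _ => zero_le_one) (fun i _ => by
          have := hQ.eigenvalues_nonneg i; linarith)

open scoped MatrixOrder in
lemma det_mono {k : ℕ} {A B : Matrix (Fin k) (Fin k) ℝ} (hA : A.PosDef)
    (hBA : (B - A).PosSemidef) : A.det ≤ B.det := by
  classical
  set R := CFC.sqrt A with hRdef
  have hRH : R.IsHermitian := (CFC.sqrt_nonneg A).posSemidef.1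
  have hRR : R * R = A := CFC.sqrt_mul_sqrt_self A hA.posSemidef.nonneg
  have hApos := hA.det_pos
  have hdetR : IsUnit R.det := by
    refine isUnit_iff_ne_zero.mpr fun h => ?_
    have hd : R.det * R.det = A.det := by rw [← det_mul, hRR]
    rw [h, zero_mul] at hd
    exact hApos.ne' hd.symm
  have hRiR : R⁻¹ * R = 1 := nonsing_inv_mul R hdetR
  have hRRi : R * R⁻¹ = 1 := mul_nonsing_inv R hdetR
  have hRiH : R⁻¹.IsHermitian := hRH.inv
  have hRAR : R⁻¹ * A * R⁻¹ = 1 := by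
    rw [← hRR, ← Matrix.mul_assoc, Matrix.mul_assoc (R⁻¹ * R), ]
    rw [Matrix.mul_assoc R⁻¹ R, ]
    rw [hRRi, Matrix.mul_one, hRiR]
  have hC1 : (R⁻¹ * B * R⁻¹ - 1).PosSemidef := by
    have h := hBA.conjTranspose_mul_mul_same R⁻¹
    rw [hRiH.eq] at h
    have : R⁻¹ * (B - A) * R⁻¹ = R⁻¹ * B * R⁻¹ - 1 := by
      rw [Matrix.mul_sub, Matrix.sub_mul, hRAR]
    rwa [this] at h
  have hdetC : 1 ≤ (R⁻¹ * B * R⁻¹).det := by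
    have h := one_le_det_one_add hC1
    rwa [add_sub_cancel] at h
  have hRCR : R * (R⁻¹ * B * R⁻¹) * R = B := by
    rw [← Matrix.mul_assoc, ← Matrix.mul_assoc, hRRi, Matrix.one_mul,
      Matrix.mul_assoc, hRiR, Matrix.mul_one]
  calc A.det = A.det * 1 := (mul_one _).symm
    _ ≤ A.det * (R⁻¹ * B * R⁻¹).det := by
        exact mul_le_mul_of_nonneg_left hdetC hApos.le
    _ = B.det := by
        have hdA : R.det * R.det = A.det := by rw [← det_mul, hRR]
        have h1 : R.det * R⁻¹.det = 1 := by rw [← det_mul, hRRi, det_one]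
        rw [← hdA]
        simp only [det_mul]
        linear_combination (R.det * R⁻¹.det * B.det + B.det) * h1

lemma khat_sub_psd {n k : ℕ} {Khat : Matrix (Fin n) (Fin n) ℝ} (hKhat : Khat.PosSemidef)
    (Uk : Matrix (Fin n) (Fin k) ℝ) (lam : Fin k → ℝ)
    (hUk_orth : Ukᵀ * Uk = 1)
    (hUk_eig : Khat * Uk = Uk * Matrix.diagonal lam) :
    (Khat - Uk * Matrix.diagonal lam * Ukᵀ).PosSemidef := by
  have hKsym : Khatᵀ = Khat := by
    rw [← Matrix.conjTranspose_eq_transpose_of_trivial, hKhat.1.eq]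
  have hKP : Khat * (Uk * Ukᵀ) = Uk * Matrix.diagonal lam * Ukᵀ := by
    rw [← Matrix.mul_assoc, hUk_eig]
  have hPK : (Uk * Ukᵀ) * Khat = Uk * Matrix.diagonal lam * Ukᵀ := by
    have h := congrArg Matrix.transpose hKP
    simp only [transpose_mul, transpose_transpose, hKsym, Matrix.diagonal_transpose] at h
    rw [h, Matrix.mul_assoc]
  have key : (1 - Uk * Ukᵀ)ᴴ * Khat * (1 - Uk * Ukᵀ) = Khat - Uk * Matrix.diagonal lam * Ukᵀ := by
    rw [Matrix.conjTranspose_eq_transpose_of_trivial, transpose_sub, transpose_one,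
      transpose_mul, transpose_transpose]
    simp only [Matrix.sub_mul, Matrix.mul_sub, Matrix.one_mul, Matrix.mul_one]
    rw [hKP, hPK]
    have hQ : Uk * Matrix.diagonal lam * Ukᵀ * (Uk * Ukᵀ) = Uk * Matrix.diagonal lam * Ukᵀ := by
      rw [Matrix.mul_assoc (Uk * Matrix.diagonal lam), ← Matrix.mul_assoc Ukᵀ, hUk_orth,
        Matrix.one_mul]
    rw [hQ]
    abel
  rw [← key]
  exact hKhat.conjTranspose_mul_mul_same _

end Aux

/-- Key inequality in the proof of Theorem 3.4: if
`0 ⪯ K̂ ⪯ K` and `Ûₖ` holds orthonormal eigenvectors of `K̂` for its `k`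
largest eigenvalues, then for any selection operator `S` with `ÛₖᵀS`
invertible, `logdet(I + η⁻²SᵀKS) ≥ ∑ log(1 + η⁻²λᵢ(K̂)/‖(ÛₖᵀS)⁻¹‖₂²)`. -/
theorem stmt_8 {n k : ℕ} (hk : 1 ≤ k) (hkn : k ≤ n)
    {K Khat : Matrix (Fin n) (Fin n) ℝ}
    (hKsymm : K.IsHermitian)
    (hKhat : Khat.PosSemidef) (hle : (K - Khat).PosSemidef)
    {η : ℝ} (hη : 0 < η)
    (Uk : Matrix (Fin n) (Fin k) ℝ)
    (hUk_orth : Ukᵀ * Uk = 1)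
    (hUk_eig : Khat * Uk =
      Uk * Matrix.diagonal (fun j : Fin k =>
        eigsDesc hKhat.isHermitian (Fin.castLE hkn j)))
    (S : Matrix (Fin n) (Fin k) ℝ) (hS : IsSelection S)
    (hinv : IsUnit (Ukᵀ * S).det) :
    ∑ i : Fin k, Real.log (1 + η⁻¹ ^ 2 * eigsDesc hKhat.isHermitian (Fin.castLE hkn i)
        / specNorm ((Ukᵀ * S)⁻¹) ^ 2)
      ≤ Real.log ((1 + η⁻¹ ^ 2 • (Sᵀ * K * S)).det) := by
  classical
  -- abbreviations
  set lam : Fin k → ℝ := fun j => eigsDesc hKhat.isHermitian (Fin.castLE hkn j) with hlamdef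
  have hlam0 : ∀ j : Fin k, 0 ≤ lam j := by
    intro j
    rw [hlamdef]
    unfold eigsDesc
    exact hKhat.eigenvalues_nonneg _
  set M : Matrix (Fin k) (Fin k) ℝ := Ukᵀ * S with hMdef
  set s : ℝ := specNorm M⁻¹ with hsdef
  have hspos : 0 < s := specNorm_inv_pos hk M hinv
  have hMM : (M * Mᵀ - s⁻¹ ^ 2 • 1).PosSemidef := mul_transpose_psd hk M hinv
  set Λ : Matrix (Fin k) (Fin k) ℝ := Matrix.diagonal lam with hΛdef
  set Λh : Matrix (Fin k) (Fin k) ℝ := Matrix.diagonal (fun j => Real.sqrt (lam j)) with hΛhdef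
  have hΛhh : Λh * Λh = Λ := by
    have hfun : (fun j => Real.sqrt (lam j) * Real.sqrt (lam j)) = lam := by
      funext j; exact Real.mul_self_sqrt (hlam0 j)
    rw [hΛhdef, hΛdef, diagonal_mul_diagonal, hfun]
  have hΛhH : Λhᴴ = Λh := (Matrix.isHermitian_diagonal _)
  have hc : (0:ℝ) < η⁻¹ ^ 2 := by positivity
  set c : ℝ := η⁻¹ ^ 2 with hcdef
  -- positive semidefiniteness facts
  have hΛpsd : Λ.PosSemidef := Matrix.PosSemidef.diagonal (fun j => hlam0 j)
  have hKhatP : (Khat - Uk * Λ * Ukᵀ).PosSemidef :=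
    khat_sub_psd hKhat Uk lam hUk_orth hUk_eig
  have hKK : (Sᵀ * K * S - Mᵀ * Λ * M).PosSemidef := by
    have hsum : ((K - Khat) + (Khat - Uk * Λ * Ukᵀ)).PosSemidef := hle.add hKhatP
    have h := hsum.conjTranspose_mul_mul_same S
    rw [Matrix.conjTranspose_eq_transpose_of_trivial] at h
    have heq : Sᵀ * ((K - Khat) + (Khat - Uk * Λ * Ukᵀ)) * S = Sᵀ * K * S - Mᵀ * Λ * M := by
      have hMt : Mᵀ = Sᵀ * Uk := by rw [hMdef, transpose_mul, transpose_transpose]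
      have hsimp : (K - Khat) + (Khat - Uk * Λ * Ukᵀ) = K - Uk * Λ * Ukᵀ := by abel
      rw [hsimp, Matrix.mul_sub, Matrix.sub_mul, hMt, hMdef]
      congr 1
      simp only [Matrix.mul_assoc]
    rwa [heq] at h
  -- the chain of determinants
  have hX : (Λh * (M * Mᵀ) * Λh).PosSemidef := by
    have h1 : (M * Mᵀ).PosSemidef := by
      have := posSemidef_self_mul_conjTranspose M
      rwa [Matrix.conjTranspose_eq_transpose_of_trivial] at this
    have h2 := h1.mul_mul_conjTranspose_same Λh
    rwa [hΛhH] at h2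
  have hMLM : (Mᵀ * Λ * M).PosSemidef := by
    have h1 := posSemidef_conjTranspose_mul_self (Λh * M)
    rw [conjTranspose_mul, hΛhH, Matrix.conjTranspose_eq_transpose_of_trivial] at h1
    have heq : Mᵀ * Λh * (Λh * M) = Mᵀ * Λ * M := by
      rw [Matrix.mul_assoc, ← Matrix.mul_assoc Λh, hΛhh, ← Matrix.mul_assoc]
    rwa [heq] at h1
  have hG1pd : (1 + (c * s⁻¹ ^ 2) • Λ).PosDef :=
    Matrix.PosDef.add_posSemidef Matrix.PosDef.one
      (psd_smul hΛpsd (by positivity))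
  have h12 : (1 + (c * s⁻¹ ^ 2) • Λ).det ≤ (1 + c • (Λh * (M * Mᵀ) * Λh)).det := by
    apply det_mono hG1pd
    have heq : 1 + c • (Λh * (M * Mᵀ) * Λh) - (1 + (c * s⁻¹ ^ 2) • Λ)
        = c • (Λh * (M * Mᵀ) * Λh - s⁻¹ ^ 2 • Λ) := by
      module
    rw [heq]
    apply psd_smul _ hc.le
    have hin : Λh * (M * Mᵀ - s⁻¹ ^ 2 • 1) * Λh = Λh * (M * Mᵀ) * Λh - s⁻¹ ^ 2 • Λ := by
      rw [Matrix.mul_sub, Matrix.sub_mul]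
      congr 1
      rw [mul_smul_comm, Matrix.mul_one, smul_mul_assoc, hΛhh]
    have h := hMM.conjTranspose_mul_mul_same Λh
    rw [hΛhH, hin] at h
    exact h
  have h23 : (1 + c • (Λh * (M * Mᵀ) * Λh)).det = (1 + c • (Mᵀ * Λ * M)).det := by
    have h := Matrix.det_one_add_mul_comm (Λh * M) (c • (Mᵀ * Λh))
    have e1 : (Λh * M) * (c • (Mᵀ * Λh)) = c • (Λh * (M * Mᵀ) * Λh) := by
      rw [mul_smul_comm]
      congr 1
      rw [Matrix.mul_assoc, ← Matrix.mul_assoc M, ← Matrix.mul_assoc]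
    have e2 : (c • (Mᵀ * Λh)) * (Λh * M) = c • (Mᵀ * Λ * M) := by
      rw [smul_mul_assoc]
      congr 1
      rw [Matrix.mul_assoc, ← Matrix.mul_assoc Λh, hΛhh, ← Matrix.mul_assoc]
    rw [e1, e2] at h
    exact h
  have h34 : (1 + c • (Mᵀ * Λ * M)).det ≤ (1 + c • (Sᵀ * K * S)).det := by
    apply det_mono (Matrix.PosDef.add_posSemidef Matrix.PosDef.one (psd_smul hMLM hc.le))
    have heq : 1 + c • (Sᵀ * K * S) - (1 + c • (Mᵀ * Λ * M))
        = c • (Sᵀ * K * S - Mᵀ * Λ * M) := by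
      module
    rw [heq]
    exact psd_smul hKK hc.le
  -- compute the determinant of the diagonal matrix
  have hdiag : (1 : Matrix (Fin k) (Fin k) ℝ) + (c * s⁻¹ ^ 2) • Λ
      = Matrix.diagonal (fun i => 1 + c * lam i / s ^ 2) := by
    rw [hΛdef, ← Matrix.diagonal_smul, ← Matrix.diagonal_one, Matrix.diagonal_add]
    apply congrArg Matrix.diagonal
    funext i
    simp only [Pi.add_apply, Pi.smul_apply, Pi.one_apply, smul_eq_mul]
    rw [div_eq_mul_inv, ← inv_pow]
    ring
  have hterm : ∀ i : Fin k, (0:ℝ) < 1 + c * lam i / s ^ 2 := by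
    intro i
    have : 0 ≤ c * lam i / s ^ 2 :=
      div_nonneg (mul_nonneg hc.le (hlam0 i)) (sq_nonneg s)
    linarith
  have hdet1 : (1 + (c * s⁻¹ ^ 2) • Λ).det = ∏ i : Fin k, (1 + c * lam i / s ^ 2) := by
    rw [hdiag, det_diagonal]
  have hsum : ∑ i : Fin k, Real.log (1 + c * lam i / s ^ 2)
      = Real.log ((1 + (c * s⁻¹ ^ 2) • Λ).det) := by
    rw [hdet1, Real.log_prod]
    intro i _
    exact (hterm i).ne'
  have hpos : 0 < (1 + (c * s⁻¹ ^ 2) • Λ).det := by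
    rw [hdet1]
    exact Finset.prod_pos (fun i _ => hterm i)
  have hfin : Real.log ((1 + (c * s⁻¹ ^ 2) • Λ).det)
      ≤ Real.log ((1 + c • (Sᵀ * K * S)).det) :=
    Real.log_le_log hpos (h12.trans (h23.le.trans h34))
  exact le_trans (le_of_eq hsum) hfin
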